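/- Let (D, y) be a left Kan pseudomonad on a 2-category K, and suppose f : B → C is a 1-cell such that Df := (y_C ∘ f)^D : DB → DC admits a right adjoint r : DC → DB in the Kleisli 2-category K_D with invertible unit η. Let A be an object admitting a pseudo-D-algebra structure (extensions along units with invertible 2-cells). Then the precomposition functor f^* : K(C, A) → K(B, A) admits a left adjoint with invertible unit; concretely, the left adjoint sends g : B → A to g^A ∘ r ∘ y_C, where g^A : DB → A is the left Kan extension of g along y_B. -/

import Mathlib

open CategoryTheory Bicategory

universe w v u

variable {K : Type u} [Bicategory.{w, v} K]

/-- `(g', δ)` exhibits `g'` as a left Kan extension of `g` along `y`. -/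
def IsLeftKan {A' A C : K} (y : A' ⟶ A) (g : A' ⟶ C) (g' : A ⟶ C) (δ : g ⟶ y ≫ g') : Prop :=
  ∀ (h : A ⟶ C) (α : g ⟶ y ≫ h), ∃! θ : g' ⟶ h, δ ≫ y ◁ θ = α

/-- A left Kan pseudomonad `(D, y)` on a bicategory `K`. -/
structure LeftKanPseudomonad (K : Type u) [Bicategory.{w, v} K] where
  /-- the action on objects -/
  obj : K → K
  /-- the unit 1-cells `y_A : A ⟶ DA` -/
  unit : ∀ A : K, A ⟶ obj A
  /-- the extension operation `f ↦ f^𝔻` -/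
  ext : ∀ {A B : K}, (A ⟶ obj B) → (obj A ⟶ obj B)
  /-- the 2-cell exhibiting the extension -/
  extCell : ∀ {A B : K} (f : A ⟶ obj B), f ⟶ unit A ≫ ext f
  /-- the extension 2-cell is invertible -/
  extCell_iso : ∀ {A B : K} (f : A ⟶ obj B), IsIso (extCell f)
  /-- `(f^𝔻, 𝔻_f)` is a left Kan extension of `f` along `y_A` -/
  ext_isKan : ∀ {A B : K} (f : A ⟶ obj B), IsLeftKan (unit A) f (ext f) (extCell f)
  /-- the identity 2-cell exhibits `𝟙 (DA)` as a left Kan extension of `y_A` along `y_A` -/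
  unit_isKan : ∀ A : K, IsLeftKan (unit A) (unit A) (𝟙 (obj A)) (ρ_ (unit A)).inv
  /-- extensions `g^𝔻` preserve the left Kan extensions `(f^𝔻, 𝔻_f)` -/
  ext_preserves : ∀ {A B C : K} (f : A ⟶ obj B) (g : B ⟶ obj C),
    IsLeftKan (unit A) (f ≫ ext g) (ext f ≫ ext g)
      (extCell f ▷ ext g ≫ (α_ (unit A) (ext f) (ext g)).hom)


/-- A pseudo-`D`-algebra structure on `C`: a choice, for every `f : B ⟶ C`, of a left Kan
extension of `f` along `y_B` with invertible unit, preserved by the extensions `(−)^𝔻`. -/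
structure PseudoDAlgebra (D : LeftKanPseudomonad K) (C : K) where
  ext : ∀ {B : K}, (B ⟶ C) → (D.obj B ⟶ C)
  cell : ∀ {B : K} (f : B ⟶ C), f ⟶ D.unit B ≫ ext f
  cell_iso : ∀ {B : K} (f : B ⟶ C), IsIso (cell f)
  isKan : ∀ {B : K} (f : B ⟶ C), IsLeftKan (D.unit B) f (ext f) (cell f)
  preserves : ∀ {A B : K} (f : A ⟶ D.obj B) (g : B ⟶ C),
    IsLeftKan (D.unit A) (f ≫ ext g) (D.ext f ≫ ext g)
      (D.extCell f ▷ ext g ≫ (α_ (D.unit A) (D.ext f) (ext g)).hom)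


/-- Precomposition with a 1-cell, as a functor on hom-categories. -/
@[simps]
def precompFunctor {B C A : K} (f : B ⟶ C) : (C ⟶ A) ⥤ (B ⟶ A) where
  obj g := f ≫ g
  map η := f ◁ η

/-! ### Auxiliary lemmas -/

section Aux

/-- The map `θ ↦ δ ≫ y ◁ θ` associated to a left Kan extension is bijective. -/
theorem IsLeftKan.bij {A' A C : K} {y : A' ⟶ A} {g : A' ⟶ C} {g' : A ⟶ C} {δ : g ⟶ y ≫ g'}
    (H : IsLeftKan y g g' δ) (h : A ⟶ C) :
    Function.Bijective (fun θ : g' ⟶ h => δ ≫ y ◁ θ) := by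
  constructor
  · intro θ₁ θ₂ hth
    obtain ⟨φ, -, hu⟩ := H h (δ ≫ y ◁ θ₂)
    rw [hu θ₁ hth, hu θ₂ rfl]
  · intro α
    obtain ⟨φ, hφ, -⟩ := H h α
    exact ⟨φ, hφ⟩

/-- Transport a left Kan extension along an invertible 2-cell on the extension. -/
theorem IsLeftKan.postcomp {A' A C : K} {y : A' ⟶ A} {g : A' ⟶ C} {g' g'' : A ⟶ C}
    {δ : g ⟶ y ≫ g'} (H : IsLeftKan y g g' δ) (θ : g' ⟶ g'') [IsIso θ] :
    IsLeftKan y g g'' (δ ≫ y ◁ θ) := by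
  intro h α
  obtain ⟨φ, hφ, hu⟩ := H h α
  have hcollapse : y ◁ θ ≫ y ◁ (inv θ ≫ φ) = y ◁ φ := by
    rw [← Bicategory.whiskerLeft_comp, IsIso.hom_inv_id_assoc]
  refine ⟨inv θ ≫ φ, ?_, ?_⟩
  · show (δ ≫ y ◁ θ) ≫ y ◁ (inv θ ≫ φ) = α
    rw [Category.assoc, hcollapse]
    exact hφ
  · intro ξ hξ
    replace hξ : (δ ≫ y ◁ θ) ≫ y ◁ ξ = α := hξ
    have h2 : θ ≫ ξ = φ := by
      refine hu _ ?_
      show δ ≫ y ◁ (θ ≫ ξ) = α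
      rw [Bicategory.whiskerLeft_comp, ← Category.assoc]
      exact hξ
    rw [← h2]; simp

/-- Transport a left Kan extension along an invertible 2-cell on the diagram. -/
theorem IsLeftKan.precomp {A' A C : K} {y : A' ⟶ A} {g g₂ : A' ⟶ C} {g' : A ⟶ C}
    {δ : g ⟶ y ≫ g'} (H : IsLeftKan y g g' δ) (j : g₂ ⟶ g) [IsIso j] :
    IsLeftKan y g₂ g' (j ≫ δ) := by
  intro h α
  obtain ⟨φ, hφ, hu⟩ := H h (inv j ≫ α)
  replace hφ : δ ≫ y ◁ φ = inv j ≫ α := hφ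
  refine ⟨φ, ?_, ?_⟩
  · show (j ≫ δ) ≫ y ◁ φ = α
    rw [Category.assoc, hφ]; simp
  · intro ξ hξ
    replace hξ : (j ≫ δ) ≫ y ◁ ξ = α := hξ
    refine hu _ ?_
    show δ ≫ y ◁ ξ = inv j ≫ α
    rw [← hξ]; simp

/-- Any two left Kan extensions of the same diagram are canonically isomorphic. -/
theorem IsLeftKan.comparison {A' A C : K} {y : A' ⟶ A} {g : A' ⟶ C} {g' g'' : A ⟶ C}
    {δ : g ⟶ y ≫ g'} {δ' : g ⟶ y ≫ g''} (H1 : IsLeftKan y g g' δ)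
    (H2 : IsLeftKan y g g'' δ') : ∃ θ : g' ⟶ g'', δ ≫ y ◁ θ = δ' ∧ IsIso θ := by
  obtain ⟨θ, hθ, -⟩ := H1 g'' δ'
  obtain ⟨θ', hθ', -⟩ := H2 g' δ
  refine ⟨θ, hθ, ⟨θ', ?_, ?_⟩⟩
  · obtain ⟨φ, -, hu⟩ := H1 g' δ
    have e1 : θ ≫ θ' = φ := by
      refine hu _ ?_
      show δ ≫ y ◁ (θ ≫ θ') = δ
      rw [Bicategory.whiskerLeft_comp, ← Category.assoc, hθ, hθ']
    have e2 : 𝟙 g' = φ := hu _ (by show δ ≫ y ◁ 𝟙 g' = δ; simp)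
    rw [e1, e2]
  · obtain ⟨φ, -, hu⟩ := H2 g'' δ'
    have e1 : θ' ≫ θ = φ := by
      refine hu _ ?_
      show δ' ≫ y ◁ (θ' ≫ θ) = δ'
      rw [Bicategory.whiskerLeft_comp, ← Category.assoc, hθ', hθ]
    have e2 : 𝟙 g'' = φ := hu _ (by show δ' ≫ y ◁ 𝟙 g'' = δ'; simp)
    rw [e1, e2]

/-- Postcomposition with an invertible 2-cell is bijective. -/
theorem postcomp_bij {C' : Type*} [Category C'] {X Y Z : C'} (w : Y ⟶ Z) [IsIso w] :
    Function.Bijective (fun t : X ⟶ Y => t ≫ w) := by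
  constructor
  · intro t₁ t₂ ht
    simpa using congrArg (· ≫ inv w) ht
  · intro s
    exact ⟨s ≫ inv w, by simp⟩

/-- If `Φ ∘ G = H` with `G`, `H` bijective, then `Φ` is bijective. -/
theorem bij_aux {X Y Z : Sort*} {Φ : Y → Z} {G : X → Y} {H : X → Z}
    (hG : Function.Bijective G) (hH : Function.Bijective H) (hc : ∀ x, Φ (G x) = H x) :
    Function.Bijective Φ := by
  constructor
  · intro y₁ y₂ hy
    obtain ⟨x₁, rfl⟩ := hG.2 y₁
    obtain ⟨x₂, rfl⟩ := hG.2 y₂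
    rw [hc, hc] at hy
    exact congrArg G (hH.1 hy)
  · intro z
    obtain ⟨x, hx⟩ := hH.2 z
    exact ⟨G x, by rw [hc, hx]⟩

end Aux

/-! ### Mates for an adjunction in a bicategory -/

section Mates

variable {a b c x : K} {l : b ⟶ c} {rr : c ⟶ b}

/-- The mate `r ≫ p ⟶ q` of a 2-cell `p ⟶ l ≫ q` under an adjunction `l ⊣ r`. -/
def mateSharp (adj : Bicategory.Adjunction l rr) {p : b ⟶ x} {q : c ⟶ x}
    (β : p ⟶ l ≫ q) : rr ≫ p ⟶ q :=
  rr ◁ β ⊗≫ adj.counit ▷ q ⊗≫ 𝟙 q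

/-- The mate `p ⟶ l ≫ q` of a 2-cell `r ≫ p ⟶ q` under an adjunction `l ⊣ r`. -/
def mateFlat (adj : Bicategory.Adjunction l rr) {p : b ⟶ x} {q : c ⟶ x}
    (ψ : rr ≫ p ⟶ q) : p ⟶ l ≫ q :=
  𝟙 p ⊗≫ adj.unit ▷ p ⊗≫ l ◁ ψ

theorem mateFlat_mateSharp (adj : Bicategory.Adjunction l rr) {p : b ⟶ x} {q : c ⟶ x}
    (β : p ⟶ l ≫ q) : mateFlat adj (mateSharp adj β) = β := by
  dsimp only [mateFlat, mateSharp]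
  calc 𝟙 p ⊗≫ adj.unit ▷ p ⊗≫ l ◁ (rr ◁ β ⊗≫ adj.counit ▷ q ⊗≫ 𝟙 q)
      = 𝟙 p ⊗≫ (adj.unit ▷ p ≫ (l ≫ rr) ◁ β) ⊗≫ (l ◁ adj.counit) ▷ q ⊗≫ 𝟙 _ := by
        bicategory
    _ = 𝟙 p ⊗≫ (𝟙 b ◁ β ≫ adj.unit ▷ (l ≫ q)) ⊗≫ (l ◁ adj.counit) ▷ q ⊗≫ 𝟙 _ := by
        rw [← whisker_exchange]
    _ = β ⊗≫ (leftZigzag adj.unit adj.counit) ▷ q ⊗≫ 𝟙 _ := by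
        dsimp only [leftZigzag]; bicategory
    _ = β := by
        rw [adj.left_triangle]; bicategory

theorem mateSharp_mateFlat (adj : Bicategory.Adjunction l rr) {p : b ⟶ x} {q : c ⟶ x}
    (ψ : rr ≫ p ⟶ q) : mateSharp adj (mateFlat adj ψ) = ψ := by
  dsimp only [mateFlat, mateSharp]
  calc rr ◁ (𝟙 p ⊗≫ adj.unit ▷ p ⊗≫ l ◁ ψ) ⊗≫ adj.counit ▷ q ⊗≫ 𝟙 q
      = 𝟙 _ ⊗≫ (rr ◁ adj.unit) ▷ p ⊗≫ ((rr ≫ l) ◁ ψ ≫ adj.counit ▷ q) ⊗≫ 𝟙 _ := by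
        bicategory
    _ = 𝟙 _ ⊗≫ (rr ◁ adj.unit) ▷ p ⊗≫ (adj.counit ▷ (rr ≫ p) ≫ 𝟙 c ◁ ψ) ⊗≫ 𝟙 _ := by
        rw [whisker_exchange]
    _ = 𝟙 _ ⊗≫ (rightZigzag adj.unit adj.counit) ▷ p ⊗≫ 𝟙 c ◁ ψ ⊗≫ 𝟙 _ := by
        dsimp only [rightZigzag]; bicategory
    _ = ψ := by
        rw [adj.right_triangle]; bicategory

theorem mateSharp_bij (adj : Bicategory.Adjunction l rr) {p : b ⟶ x} {q : c ⟶ x} :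
    Function.Bijective (mateSharp adj : (p ⟶ l ≫ q) → (rr ≫ p ⟶ q)) := by
  refine Function.bijective_iff_has_inverse.mpr ⟨mateFlat adj, ?_, ?_⟩
  · intro β; exact mateFlat_mateSharp adj β
  · intro ψ; exact mateSharp_mateFlat adj ψ

end Mates

/-! ### The unit 2-cell for the left adjoint -/

/-- The (invertible) unit 2-cell `g ⟶ f ≫ (y_C ≫ r ≫ g^A)`. -/
noncomputable def Δcell (D : LeftKanPseudomonad K) {B C A : K} (f : B ⟶ C) (r : D.obj C ⟶ D.obj B)
    (η : 𝟙 (D.obj B) ⟶ D.ext (f ≫ D.unit C) ≫ r) (alg : PseudoDAlgebra D A) (g : B ⟶ A)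
    [IsIso (D.extCell (f ≫ D.unit C))] : g ⟶ f ≫ (D.unit C ≫ r ≫ alg.ext g) :=
  alg.cell g ⊗≫ D.unit B ◁ (η ▷ alg.ext g) ⊗≫
    inv (D.extCell (f ≫ D.unit C)) ▷ (r ≫ alg.ext g) ⊗≫ 𝟙 _

theorem Δcell_iso (D : LeftKanPseudomonad K) {B C A : K} (f : B ⟶ C) (r : D.obj C ⟶ D.obj B)
    (η : 𝟙 (D.obj B) ⟶ D.ext (f ≫ D.unit C) ≫ r) (alg : PseudoDAlgebra D A) (g : B ⟶ A)
    [IsIso (D.extCell (f ≫ D.unit C))] [IsIso η] :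
    IsIso (Δcell D f r η alg g) := by
  haveI := alg.cell_iso g
  dsimp only [Δcell, bicategoricalComp]
  infer_instance

/-- The main 2-cell computation. -/
theorem main_eq (D : LeftKanPseudomonad K) {B C A : K} (f : B ⟶ C) (r : D.obj C ⟶ D.obj B)
    (adj : Bicategory.Adjunction (D.ext (f ≫ D.unit C)) r) (alg : PseudoDAlgebra D A)
    (g : B ⟶ A) (h : C ⟶ A) [IsIso (D.extCell (f ≫ D.unit C))] [IsIso (alg.cell h)]
    (β : alg.ext g ⟶ D.ext (f ≫ D.unit C) ≫ alg.ext h) :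
    Δcell D f r adj.unit alg g ≫ f ◁ (D.unit C ◁ mateSharp adj β ≫ inv (alg.cell h)) =
      (alg.cell g ≫ D.unit B ◁ β) ≫
        (𝟙 (D.unit B ≫ D.ext (f ≫ D.unit C) ≫ alg.ext h) ⊗≫
          inv (D.extCell (f ≫ D.unit C)) ▷ alg.ext h ⊗≫ f ◁ inv (alg.cell h)) := by
  calc Δcell D f r adj.unit alg g ≫ f ◁ (D.unit C ◁ mateSharp adj β ≫ inv (alg.cell h))
      = alg.cell g ⊗≫ D.unit B ◁ (adj.unit ▷ alg.ext g) ⊗≫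
          (inv (D.extCell (f ≫ D.unit C)) ▷ (r ≫ alg.ext g) ≫
            (f ≫ D.unit C) ◁ mateSharp adj β) ⊗≫ f ◁ inv (alg.cell h) := by
        dsimp only [Δcell]; bicategory
    _ = alg.cell g ⊗≫ D.unit B ◁ (adj.unit ▷ alg.ext g) ⊗≫
          ((D.unit B ≫ D.ext (f ≫ D.unit C)) ◁ mateSharp adj β ≫
            inv (D.extCell (f ≫ D.unit C)) ▷ alg.ext h) ⊗≫ f ◁ inv (alg.cell h) := by
        rw [← whisker_exchange]
    _ = alg.cell g ⊗≫ D.unit B ◁ (mateFlat adj (mateSharp adj β)) ⊗≫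
          inv (D.extCell (f ≫ D.unit C)) ▷ alg.ext h ⊗≫ f ◁ inv (alg.cell h) := by
        dsimp only [mateFlat]; bicategory
    _ = alg.cell g ⊗≫ D.unit B ◁ β ⊗≫
          inv (D.extCell (f ≫ D.unit C)) ▷ alg.ext h ⊗≫ f ◁ inv (alg.cell h) := by
        rw [mateFlat_mateSharp]
    _ = _ := by bicategory

/-- if `Df := (y_C ∘ f)^𝔻` admits a right adjoint `r` in the Kleisli 2-category
(i.e. an adjunction in `K` in which `r` is a morphism of free algebras) with invertible unit,
and `A` carries a pseudo-`D`-algebra structure, then precomposition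
`f^* : K(C, A) ⥤ K(B, A)` admits a left adjoint with invertible unit, given by
`g ↦ g^A ∘ r ∘ y_C`. -/
theorem precomp_left_adjoint_of_kleisli_coreflection (D : LeftKanPseudomonad K)
    {B C : K} (f : B ⟶ C) (r : D.obj C ⟶ D.obj B)
    (adj : Bicategory.Adjunction (D.ext (f ≫ D.unit C)) r) (hη : IsIso adj.unit)
    (hr : ∀ {X : K} (g : X ⟶ D.obj C),
      IsLeftKan (D.unit X) (g ≫ r) (D.ext g ≫ r)
        (D.extCell g ▷ r ≫ (α_ (D.unit X) (D.ext g) r).hom))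
    (A : K) (alg : PseudoDAlgebra D A) :
    ∃ (L : (B ⟶ A) ⥤ (C ⟶ A)) (adjF : L ⊣ precompFunctor (A := A) f),
      IsIso adjF.unit ∧ ∀ g : B ⟶ A, L.obj g = D.unit C ≫ r ≫ alg.ext g := by
  classical
  haveI := hη
  haveI : IsIso (D.extCell (f ≫ D.unit C)) := D.extCell_iso _
  -- `r` is a left Kan extension of `y_C ≫ r` along `y_C`, with identity unit
  obtain ⟨u, hu, hu_iso⟩ := (D.ext_isKan (D.unit C)).comparison (D.unit_isKan C)
  haveI := hu_iso
  have kanR : IsLeftKan (D.unit C) (D.unit C ≫ r) r (𝟙 (D.unit C ≫ r)) := by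
    haveI : IsIso (u ▷ r ≫ (λ_ r).hom) := by infer_instance
    have h1 := (hr (D.unit C)).postcomp (u ▷ r ≫ (λ_ r).hom)
    have hc : (D.extCell (D.unit C) ▷ r ≫ (α_ (D.unit C) (D.ext (D.unit C)) r).hom) ≫
        D.unit C ◁ (u ▷ r ≫ (λ_ r).hom) = 𝟙 (D.unit C ≫ r) := by
      calc (D.extCell (D.unit C) ▷ r ≫ (α_ (D.unit C) (D.ext (D.unit C)) r).hom) ≫
          D.unit C ◁ (u ▷ r ≫ (λ_ r).hom)
          = (D.extCell (D.unit C) ≫ D.unit C ◁ u) ▷ r ⊗≫ 𝟙 _ := by bicategory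
        _ = 𝟙 _ := by rw [hu]; bicategory
    rwa [hc] at h1
  -- density: `r ≫ g^A` is a left Kan extension of `y_C ≫ (r ≫ g^A)` along `y_C`
  obtain ⟨e, he, he_iso⟩ := (D.ext_isKan (D.unit C ≫ r)).comparison kanR
  haveI := he_iso
  have kanDense : ∀ g : B ⟶ A,
      IsLeftKan (D.unit C) (D.unit C ≫ (r ≫ alg.ext g)) (r ≫ alg.ext g) (𝟙 _) := by
    intro g
    haveI : IsIso (e ▷ alg.ext g) := by infer_instance
    have h1 := (alg.preserves (D.unit C ≫ r) g).postcomp (e ▷ alg.ext g)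
    have h2 := h1.precomp (α_ (D.unit C) r (alg.ext g)).inv
    have hc : (α_ (D.unit C) r (alg.ext g)).inv ≫
        ((D.extCell (D.unit C ≫ r) ▷ alg.ext g ≫
          (α_ (D.unit C) (D.ext (D.unit C ≫ r)) (alg.ext g)).hom) ≫
          D.unit C ◁ (e ▷ alg.ext g)) = 𝟙 (D.unit C ≫ (r ≫ alg.ext g)) := by
      calc (α_ (D.unit C) r (alg.ext g)).inv ≫
          ((D.extCell (D.unit C ≫ r) ▷ alg.ext g ≫
            (α_ (D.unit C) (D.ext (D.unit C ≫ r)) (alg.ext g)).hom) ≫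
            D.unit C ◁ (e ▷ alg.ext g))
          = 𝟙 _ ⊗≫ (D.extCell (D.unit C ≫ r) ≫ D.unit C ◁ e) ▷ alg.ext g ⊗≫ 𝟙 _ := by
            bicategory
        _ = 𝟙 _ := by rw [he]; bicategory
    rwa [hc] at h2
  -- the key bijectivity
  have bij : ∀ (g : B ⟶ A) (h : C ⟶ A),
      Function.Bijective
        (fun θ : (D.unit C ≫ r ≫ alg.ext g) ⟶ h => Δcell D f r adj.unit alg g ≫ f ◁ θ) := by
    intro g h
    haveI := alg.cell_iso h
    refine bij_aux (G := fun β : alg.ext g ⟶ D.ext (f ≫ D.unit C) ≫ alg.ext h =>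
        D.unit C ◁ mateSharp adj β ≫ inv (alg.cell h))
      (H := fun β => (alg.cell g ≫ D.unit B ◁ β) ≫
        (𝟙 (D.unit B ≫ D.ext (f ≫ D.unit C) ≫ alg.ext h) ⊗≫
          inv (D.extCell (f ≫ D.unit C)) ▷ alg.ext h ⊗≫ f ◁ inv (alg.cell h))) ?_ ?_ ?_
    · have h1 : Function.Bijective
          (fun ψ : (r ≫ alg.ext g) ⟶ alg.ext h => D.unit C ◁ ψ) := by
        have := (kanDense g).bij (alg.ext h)
        simpa using this
      exact (postcomp_bij (inv (alg.cell h))).comp (h1.comp (mateSharp_bij adj))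
    · haveI : IsIso (𝟙 (D.unit B ≫ D.ext (f ≫ D.unit C) ≫ alg.ext h) ⊗≫
          inv (D.extCell (f ≫ D.unit C)) ▷ alg.ext h ⊗≫ f ◁ inv (alg.cell h)) := by
        dsimp only [bicategoricalComp]; infer_instance
      exact (postcomp_bij _).comp ((alg.isKan g).bij _)
    · intro β
      exact main_eq D f r adj alg g h β
  -- assemble the adjunction
  have he' : ∀ (g : B ⟶ A) (h h' : C ⟶ A) (κ : h ⟶ h')
      (θ : (D.unit C ≫ r ≫ alg.ext g) ⟶ h),
      (Equiv.ofBijective _ (bij g h')) (θ ≫ κ) =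
        (Equiv.ofBijective _ (bij g h)) θ ≫ (precompFunctor (A := A) f).map κ := by
    intro g h h' κ θ
    simp [Bicategory.whiskerLeft_comp]
    exact (Category.assoc _ _ _).symm
  refine ⟨_, CategoryTheory.Adjunction.adjunctionOfEquivLeft
      (G := precompFunctor (A := A) f)
      (F_obj := fun g => D.unit C ≫ r ≫ alg.ext g)
      (fun g h => Equiv.ofBijective _ (bij g h)) he', ?_, fun g => rfl⟩
  have hunit : ∀ g : B ⟶ A,
      IsIso ((CategoryTheory.Adjunction.adjunctionOfEquivLeft
        (G := precompFunctor (A := A) f)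
        (F_obj := fun g => D.unit C ≫ r ≫ alg.ext g)
        (fun g h => Equiv.ofBijective _ (bij g h)) he').unit.app g) := by
    intro g
    haveI := alg.cell_iso g
    haveI : IsIso (Δcell D f r adj.unit alg g) := Δcell_iso D f r adj.unit alg g
    have happ : (CategoryTheory.Adjunction.adjunctionOfEquivLeft
        (G := precompFunctor (A := A) f)
        (F_obj := fun g => D.unit C ≫ r ≫ alg.ext g)
        (fun g h => Equiv.ofBijective _ (bij g h)) he').unit.app g =
        Δcell D f r adj.unit alg g := by
      simp [CategoryTheory.Adjunction.adjunctionOfEquivLeft]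
      show Δcell D f r adj.unit alg g ≫ f ◁ 𝟙 _ = _
      rw [Bicategory.whiskerLeft_id, Category.comp_id]
    rw [happ]
    exact Δcell_iso D f r adj.unit alg g
  exact NatIso.isIso_of_isIso_app _
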